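/- Let x_1 ≤ x_2 ≤ … ≤ x_n be points on the real line with Euclidean distance, and let C=(C_1,…,C_k) be a k-clustering with contiguous clusters C_1={x_1,…,x_{i_1}}, C_2={x_{i_1+1},…,x_{i_2}}, …, C_k={x_{i_{k−1}+1},…,x_n} for some 1 ≤ i_1 < … < i_{k−1} < n. Then C is IP-stable if and only if all boundary points x_{i_l} and x_{i_l+1} for l∈{1,…,k−1} are IP-stable. -/

import Mathlib

open Finset

lemma ip_key {α : Type*} [DecidableEq α] (x : α → ℝ) (A B : Finset α) (p q : α)
    (hp : p ∈ A) (hA : 2 ≤ A.card) (hB : B.Nonempty)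
    (hT : ∀ y ∈ B, |x p - x y| = |x q - x y| + |x p - x q|)
    (hstab : (∑ y ∈ A, |x q - x y|) / ((A.card : ℝ) - 1) ≤
      (∑ y ∈ B, |x q - x y|) / (B.card : ℝ)) :
    (∑ y ∈ A, |x p - x y|) / ((A.card : ℝ) - 1) ≤
      (∑ y ∈ B, |x p - x y|) / (B.card : ℝ) := by
  set δ := |x p - x q| with hδ
  have hδ0 : 0 ≤ δ := abs_nonneg _
  have hm0 : (0:ℝ) < (A.card : ℝ) - 1 := by
    have : (2:ℝ) ≤ (A.card : ℝ) := by exact_mod_cast hA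
    linarith
  have hBc : (0:ℝ) < (B.card : ℝ) := by exact_mod_cast Finset.card_pos.mpr hB
  have hS : (∑ y ∈ A, |x p - x y|) ≤ (∑ y ∈ A, |x q - x y|) + ((A.card:ℝ) - 1) * δ := by
    have h0 : (∑ y ∈ A, |x p - x y|) = ∑ y ∈ A.erase p, |x p - x y| :=
      (Finset.sum_erase A (by simp)).symm
    have h1 : (∑ y ∈ A.erase p, |x p - x y|) ≤ ∑ y ∈ A.erase p, (|x q - x y| + δ) := by
      refine Finset.sum_le_sum fun y _ => ?_
      have := abs_sub_le (x p) (x q) (x y)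
      linarith
    have h2 : (∑ y ∈ A.erase p, (|x q - x y| + δ)) =
        (∑ y ∈ A.erase p, |x q - x y|) + ((A.card:ℝ) - 1) * δ := by
      rw [Finset.sum_add_distrib, Finset.sum_const, nsmul_eq_mul,
        Finset.card_erase_of_mem hp, Nat.cast_sub (by omega), Nat.cast_one]
    have h3 : (∑ y ∈ A.erase p, |x q - x y|) ≤ ∑ y ∈ A, |x q - x y| :=
      Finset.sum_le_sum_of_subset_of_nonneg (Finset.erase_subset _ _)
        (fun _ _ _ => abs_nonneg _)
    linarith [h0 ▸ (h1.trans_eq h2)]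
  have hTsum : (∑ y ∈ B, |x p - x y|) = (∑ y ∈ B, |x q - x y|) + (B.card : ℝ) * δ := by
    rw [Finset.sum_congr rfl hT, Finset.sum_add_distrib, Finset.sum_const, nsmul_eq_mul]
  rw [div_le_div_iff₀ hm0 hBc] at hstab ⊢
  rw [hTsum]
  nlinarith [mul_le_mul_of_nonneg_right hS (le_of_lt hBc)]


/-- A point (here: an index) `x` is IP-stable in the clustering `C` w.r.t. `d`. -/
def IPStablePt {α : Type*} [DecidableEq α] (d : α → α → ℝ) {k : ℕ}
    (C : Fin k → Finset α) (x : α) : Prop :=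
  ∀ i : Fin k, x ∈ C i →
    (C i = {x} ∨
      ∀ j : Fin k, C j ≠ C i →
        (∑ y ∈ C i, d x y) / ((C i).card - 1 : ℝ) ≤
          (∑ y ∈ C j, d x y) / ((C j).card : ℝ))

/-- for sorted points on the line and a clustering into `k`
contiguous clusters (given by boundary positions `b 0 = 0 < b 1 < ⋯ < b k = n`),
the clustering is IP-stable iff all boundary points `x_{b l - 1}` (last point of
a cluster) and `x_{b l}` (first point of the next cluster), for the interior
boundaries `0 < l < k`, are IP-stable. -/
theorem ip_stable_iff_boundary_points_stable_on_line
    (n k : ℕ) (hk : 1 ≤ k) (x : Fin n → ℝ) (hx : Monotone x)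
    (b : Fin (k + 1) → ℕ) (hb : StrictMono b)
    (hb0 : b 0 = 0) (hbn : b (Fin.last k) = n)
    (C : Fin k → Finset (Fin n))
    (hC : ∀ (l : Fin k) (p : Fin n),
      p ∈ C l ↔ b l.castSucc ≤ (p : ℕ) ∧ (p : ℕ) < b l.succ) :
    (∀ p : Fin n, IPStablePt (fun p q => |x p - x q|) C p) ↔
      (∀ l : Fin (k + 1), 0 < (l : ℕ) → (l : ℕ) < k →
        ∀ p : Fin n, ((p : ℕ) = b l - 1 ∨ (p : ℕ) = b l) →
          IPStablePt (fun p q => |x p - x q|) C p) := by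
  have hble : ∀ l : Fin (k+1), b l ≤ n := fun l => hbn ▸ hb.monotone (Fin.le_last l)
  have hlt : ∀ l : Fin k, b l.castSucc < b l.succ := fun l => hb Fin.castSucc_lt_succ
  constructor
  · intro h l _ _ p _
    exact h p
  · intro h p i hpi
    have hp := (hC i p).mp hpi
    by_cases h1 : (C i).card ≤ 1
    · left
      have hc1 : (C i).card = 1 := le_antisymm h1 (Finset.card_pos.mpr ⟨p, hpi⟩)
      obtain ⟨a, ha⟩ := Finset.card_eq_one.mp hc1
      rw [ha] at hpi ⊢
      rw [Finset.mem_singleton.mp hpi]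
    · right
      push_neg at h1
      intro j hji
      have hji' : (j : ℕ) ≠ (i : ℕ) := by
        intro hh
        exact hji (by rw [Fin.ext (by exact hh : (j:ℕ) = (i:ℕ))])
      have hBne : (C j).Nonempty := by
        refine ⟨⟨b j.castSucc, lt_of_lt_of_le (hlt j) (hble j.succ)⟩, (hC j _).mpr ⟨le_refl _, hlt j⟩⟩
      rcases lt_or_gt_of_ne hji' with hij | hij
      · -- j < i : compare with first point of C i
        have hq : b i.castSucc < n := lt_of_lt_of_le (hlt i) (hble i.succ)
        set q : Fin n := ⟨b i.castSucc, hq⟩ with hqdef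
        have hqC : q ∈ C i := (hC i q).mpr ⟨le_refl _, hlt i⟩
        have hbd : IPStablePt (fun p q => |x p - x q|) C q :=
          h i.castSucc (by simp only [Fin.coe_castSucc]; omega)
            (by simpa using i.isLt) q (Or.inr rfl)
        rcases hbd i hqC with hsing | hineq
        · exfalso
          have : (C i).card = 1 := by rw [hsing]; simp
          omega
        · have hstab := hineq j hji
          have hT : ∀ y ∈ C j, |x p - x y| = |x q - x y| + |x p - x q| := by
            intro y hy
            have hy' := (hC j y).mp hy
            have h1' : (y : ℕ) < b j.succ := hy'.2
            have h2' : b j.succ ≤ b i.castSucc := by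
              refine hb.monotone ?_
              rw [Fin.le_def]
              simp only [Fin.val_succ, Fin.coe_castSucc]
              omega
            have hxy : x y ≤ x q := hx (by rw [Fin.le_def]; simp only [hqdef]; omega)
            have hxqp : x q ≤ x p := hx (by rw [Fin.le_def]; exact hp.1)
            rw [abs_of_nonneg (by linarith), abs_of_nonneg (by linarith),
              abs_of_nonneg (by linarith)]
            ring
          exact ip_key x (C i) (C j) p q hpi h1 hBne hT hstab
      · -- i < j : compare with last point of C i
        have hpos : 0 < b i.succ := lt_of_le_of_lt (Nat.zero_le _) (hlt i)
        have hq : b i.succ - 1 < n := lt_of_lt_of_le (Nat.sub_lt hpos one_pos) (hble i.succ)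
        set q : Fin n := ⟨b i.succ - 1, hq⟩ with hqdef
        have hqC : q ∈ C i := (hC i q).mpr ⟨Nat.le_sub_one_of_lt (hlt i), Nat.sub_lt hpos one_pos⟩
        have hbd : IPStablePt (fun p q => |x p - x q|) C q := by
          refine h i.succ ?_ ?_ q (Or.inl rfl)
          · simp
          · simp only [Fin.val_succ]
            omega
        rcases hbd i hqC with hsing | hineq
        · exfalso
          have : (C i).card = 1 := by rw [hsing]; simp
          omega
        · have hstab := hineq j hji
          have hT : ∀ y ∈ C j, |x p - x y| = |x q - x y| + |x p - x q| := by
            intro y hy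
            have hy' := (hC j y).mp hy
            have h2' : b i.succ ≤ b j.castSucc := by
              refine hb.monotone ?_
              rw [Fin.le_def]
              simp only [Fin.val_succ, Fin.coe_castSucc]
              omega
            have hxy : x q ≤ x y := hx (by rw [Fin.le_def]; simp only [hqdef]; omega)
            have hpq : (p : ℕ) ≤ b i.succ - 1 := Nat.le_sub_one_of_lt hp.2
            have hxqp : x p ≤ x q := hx (by rw [Fin.le_def]; exact hpq)
            rw [abs_of_nonpos (by linarith), abs_of_nonpos (by linarith),
              abs_of_nonpos (by linarith)]
            ring
          exact ip_key x (C i) (C j) p q hpi h1 hBne hT hstab
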